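/- Let V be a finite-dimensional vector space over a finite field F, let X = (X_1,...,X_n) be a family of subspaces of V, and let T ≤ V be a subspace. Then T is a partial q-transversal of X if and only if for every subset J ⊆ {1,...,n} we have dim(T ∩ ⋂_{j∈J} X_j) + |J| ≤ n, where the intersection over the empty index set is V. -/

import Mathlib

/-- `T` is a partial q-transversal of the family `X` of subspaces of `V`: every
(vector-space) basis `b 1, …, b m` of `T` admits an injection `σ` into the index set
with `b i ∉ X (σ i)` for all `i`. -/
def IsPartialQTransversal {F V ι : Type*} [Field F] [AddCommGroup V] [Module F V]
    (X : ι → Submodule F V) (T : Submodule F V) : Prop :=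
  ∀ (m : ℕ) (b : Fin m → V), LinearIndependent F b → Submodule.span F (Set.range b) = T →
    ∃ σ : Fin m → ι, Function.Injective σ ∧ ∀ i, b i ∉ X (σ i)

/-- A subspace `T ≤ V` is a partial q-transversal of `X = (X 1, …, X n)` iff for every
`J ⊆ {1,…,n}` we have `dim (T ⊓ ⋂_{j ∈ J} X j) + |J| ≤ n` (the intersection over the
empty index set being all of `V`). -/
theorem isPartialQTransversal_iff {F V : Type*} [Field F] [Fintype F]
    [AddCommGroup V] [Module F V] [FiniteDimensional F V]
    (n : ℕ) (X : Fin n → Submodule F V) (T : Submodule F V) :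
    IsPartialQTransversal X T ↔
    (∀ J : Finset (Fin n), Module.finrank F ↥(T ⊓ ⨅ j ∈ J, X j) + J.card ≤ n) := by
  classical
  constructor
  · intro hT J
    set W : Submodule F V := T ⊓ ⨅ j ∈ J, X j with hWdef
    have hWT : W ≤ T := inf_le_left
    set W' : Submodule F ↥T := W.comap T.subtype with hW'def
    have hrk : Module.finrank F W' = Module.finrank F W :=
      (Submodule.comapSubtypeEquivOfLe hWT).finrank_eq
    obtain ⟨C, hC⟩ := Submodule.exists_isCompl W'
    set d := Module.finrank F W' with hd
    set c := Module.finrank F C with hc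
    let b1 := Module.finBasis F W'
    let b2 := Module.finBasis F C
    let B0 : Module.Basis (Fin d ⊕ Fin c) F ↥T :=
      (b1.prod b2).map (Submodule.prodEquivOfIsCompl W' C hC)
    let B := B0.reindex finSumFinEquiv
    let v : Fin (d + c) → V := fun i => ((B i : ↥T) : V)
    have hli : LinearIndependent F v :=
      B.linearIndependent.map' T.subtype T.ker_subtype
    have hsp : Submodule.span F (Set.range v) = T := by
      have h1 : Set.range v = T.subtype '' Set.range B := by
        rw [← Set.range_comp]; rfl
      rw [h1, ← Submodule.map_span, B.span_eq, Submodule.map_top, Submodule.range_subtype]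
    obtain ⟨σ, hσinj, hσ⟩ := hT (d + c) v hli hsp
    have hmem : ∀ i : Fin d, v (finSumFinEquiv (Sum.inl i)) ∈ W := by
      intro i
      have h1 : B (finSumFinEquiv (Sum.inl i)) = B0 (Sum.inl i) := by
        simp [B, Module.Basis.reindex_apply]
      have h2 : B0 (Sum.inl i) = Submodule.prodEquivOfIsCompl W' C hC (b1 i, 0) := by
        simp [B0, Module.Basis.map_apply, Module.Basis.prod_apply]
      have h3 : (B0 (Sum.inl i) : ↥T) = ((b1 i : ↥T)) := by
        rw [h2]
        simp [Submodule.coe_prodEquivOfIsCompl']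
      have : v (finSumFinEquiv (Sum.inl i)) = ((b1 i : ↥T) : V) := by
        simp only [v, h1, h3]
      rw [this]
      exact (b1 i).2
    have hnotJ : ∀ i : Fin d, σ (finSumFinEquiv (Sum.inl i)) ∉ J := by
      intro i hiJ
      apply hσ (finSumFinEquiv (Sum.inl i))
      have h2 : v (finSumFinEquiv (Sum.inl i)) ∈ ⨅ j ∈ J, X j := (hmem i).2
      rw [Submodule.mem_iInf] at h2
      have := h2 (σ (finSumFinEquiv (Sum.inl i)))
      rw [Submodule.mem_iInf] at this
      exact this hiJ
    let f : Fin d → ↥(Jᶜ : Finset (Fin n)) := fun i =>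
      ⟨σ (finSumFinEquiv (Sum.inl i)), Finset.mem_compl.mpr (hnotJ i)⟩
    have hfinj : Function.Injective f := by
      intro a b hab
      have := hσinj (Subtype.ext_iff.mp hab)
      exact Sum.inl_injective (finSumFinEquiv.injective this)
    have hcard : d ≤ n - J.card := by
      simpa [Finset.card_compl] using Fintype.card_le_of_injective f hfinj
    rw [← hrk]
    have hJn : J.card ≤ n := by
      simpa using Finset.card_le_card (Finset.subset_univ J)
    omega
  · intro h m b hb hspan
    let t : Fin m → Finset (Fin n) := fun i => Finset.univ.filter fun j => b i ∉ X j
    have hall : ∀ s : Finset (Fin m), s.card ≤ (s.biUnion t).card := by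
      intro s
      set J : Finset (Fin n) := Finset.univ.filter (fun j => ∀ i ∈ s, b i ∈ X j) with hJ
      have hbu : s.biUnion t = Jᶜ := by
        ext j
        simp only [Finset.mem_biUnion, t, Finset.mem_filter, Finset.mem_univ, true_and,
          Finset.mem_compl, hJ]
        push_neg
        rfl
      have hmem : ∀ i : Fin m, i ∈ s → b i ∈ T ⊓ ⨅ j ∈ J, X j := by
        intro i hi
        rw [Submodule.mem_inf]
        refine ⟨?_, ?_⟩
        · rw [← hspan]; exact Submodule.subset_span (Set.mem_range_self i)
        · rw [Submodule.mem_iInf]; intro j; rw [Submodule.mem_iInf]; intro hj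
          rw [hJ, Finset.mem_filter] at hj
          exact hj.2 i hi
      let cfam : ↥s → ↥(T ⊓ ⨅ j ∈ J, X j) := fun i => ⟨b i, hmem i i.2⟩
      have hcli : LinearIndependent F cfam := by
        apply LinearIndependent.of_comp (T ⊓ ⨅ j ∈ J, X j).subtype
        exact hb.comp Subtype.val Subtype.val_injective
      have h1 : s.card ≤ Module.finrank F ↥(T ⊓ ⨅ j ∈ J, X j) := by
        have := hcli.fintype_card_le_finrank
        simpa using this
      have h2 := h J
      have hc : Jᶜ.card = n - J.card := by simp [Finset.card_compl]
      rw [hbu, hc]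
      omega
    rw [Finset.all_card_le_biUnion_card_iff_exists_injective] at hall
    obtain ⟨σ, hinj, hmem⟩ := hall
    refine ⟨σ, hinj, fun i => ?_⟩
    have := hmem i
    simp only [t, Finset.mem_filter] at this
    exact this.2
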